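/- Let f be a polynomial with rational coefficients of degree d ≥ 2. Then the density of the image of f in ℚ is zero: the ratio #{y ∈ ℚ : y = f(x) for some x ∈ ℚ, H(y) ≤ B} / #{x ∈ ℚ : H(x) ≤ B} tends to 0 as B → ∞. Moreover, there exist positive real constants B₀ and E₀ (depending only on f) such that for all B ≥ B₀ this ratio is at most E₀·B^{(2/d) − 2}. -/

import Mathlib

set_option maxHeartbeats 1000000


open Polynomial

/-- The height of a rational number `x` (in lowest terms): the maximum of the absolute
value of its numerator and its denominator. -/
def ratHeight (x : ℚ) : ℕ := max x.num.natAbs x.den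

lemma aux_sum_inv_sq : ∀ N : ℕ, 1 ≤ N → ∑ d ∈ Finset.Icc 2 N, (1:ℝ)/(d:ℝ)^2 ≤ 2/3 - 1/((N:ℝ)+1/2) := by
  intro N
  induction N with
  | zero => intro h; omega
  | succ n ih =>
    intro _
    rcases Nat.eq_zero_or_pos n with h1 | h1
    · subst h1; simp; norm_num
    · have hn : 1 ≤ n := h1
      have h2 : 2 ≤ n + 1 := by omega
      rw [Finset.sum_Icc_succ_top h2]
      have := ih hn
      have hpos : (0:ℝ) < (n:ℝ) + 1/2 := by positivity
      have key : (1:ℝ)/((n:ℝ)+1)^2 ≤ 1/((n:ℝ)+1/2) - 1/((n:ℝ)+1+1/2) := by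
        rw [div_sub_div _ _ (ne_of_gt hpos) (by positivity)]
        rw [div_le_div_iff₀ (by positivity) (by positivity)]
        nlinarith [sq_nonneg ((n:ℝ))]
      push_cast
      push_cast at this key
      linarith


lemma coprime_pairs_count (N : ℕ) (hN : 1 ≤ N) :
    ((N:ℝ)^2)/3 ≤ (((Finset.Ioc 0 N ×ˢ Finset.Ioc 0 N).filter
      (fun ab : ℕ × ℕ => Nat.Coprime ab.1 ab.2)).card : ℝ) := by
  classical
  set box := Finset.Ioc 0 N ×ˢ Finset.Ioc 0 N with hbox
  have hboxcard : box.card = N * N := by simp [hbox]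
  have hsplit := Finset.card_filter_add_card_filter_not
    (s := box) (p := fun ab : ℕ × ℕ => Nat.Coprime ab.1 ab.2)
  -- bound the non-coprime count
  have hsub : box.filter (fun ab : ℕ × ℕ => ¬ Nat.Coprime ab.1 ab.2) ⊆
      (Finset.Icc 2 N).biUnion (fun k =>
        ((Finset.Ioc 0 N).filter (k ∣ ·)) ×ˢ ((Finset.Ioc 0 N).filter (k ∣ ·))) := by
    intro ab hab
    simp only [Finset.mem_filter, hbox, Finset.mem_product, Finset.mem_Ioc] at hab
    obtain ⟨⟨⟨ha0, haN⟩, hb0, hbN⟩, hnc⟩ := hab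
    have hg2 : 2 ≤ Nat.gcd ab.1 ab.2 := by
      rcases Nat.lt_or_ge (Nat.gcd ab.1 ab.2) 2 with h | h
      · interval_cases h' : Nat.gcd ab.1 ab.2
        · exact absurd (Nat.eq_zero_of_gcd_eq_zero_left h') (by omega)
        · exact absurd h' hnc
      · exact h
    have hgN : Nat.gcd ab.1 ab.2 ≤ N := le_trans (Nat.gcd_le_left _ ha0) haN
    simp only [Finset.mem_biUnion, Finset.mem_Icc, Finset.mem_product, Finset.mem_filter,
      Finset.mem_Ioc]
    exact ⟨Nat.gcd ab.1 ab.2, ⟨hg2, hgN⟩, ⟨⟨ha0, haN⟩, Nat.gcd_dvd_left _ _⟩,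
      ⟨⟨hb0, hbN⟩, Nat.gcd_dvd_right _ _⟩⟩
  have hcard1 : (box.filter (fun ab : ℕ × ℕ => ¬ Nat.Coprime ab.1 ab.2)).card ≤
      ∑ k ∈ Finset.Icc 2 N, (N / k) * (N / k) := by
    refine le_trans (Finset.card_le_card hsub) (le_trans (Finset.card_biUnion_le) ?_)
    refine Finset.sum_le_sum fun k _ => ?_
    rw [Finset.card_product]
    have : ((Finset.Ioc 0 N).filter (k ∣ ·)).card = N / k := Nat.Ioc_filter_dvd_card_eq_div N k
    rw [this]
  -- real estimate
  have hreal : ((box.filter (fun ab : ℕ × ℕ => ¬ Nat.Coprime ab.1 ab.2)).card : ℝ) ≤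
      (2/3) * (N:ℝ)^2 := by
    calc ((box.filter (fun ab : ℕ × ℕ => ¬ Nat.Coprime ab.1 ab.2)).card : ℝ)
        ≤ ((∑ k ∈ Finset.Icc 2 N, (N / k) * (N / k) : ℕ) : ℝ) := by exact_mod_cast hcard1
      _ ≤ ∑ k ∈ Finset.Icc 2 N, (N:ℝ)^2 * (1/(k:ℝ)^2) := by
          push_cast
          refine Finset.sum_le_sum fun k hk => ?_
          have hk0 : (0:ℝ) < (k:ℝ) := by
            have : 2 ≤ k := (Finset.mem_Icc.mp hk).1
            positivity
          have hdiv : ((N / k : ℕ) : ℝ) ≤ (N:ℝ)/(k:ℝ) := by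
            rw [le_div_iff₀ hk0]
            exact_mod_cast Nat.div_mul_le_self N k
          have h1 : (0:ℝ) ≤ ((N / k : ℕ) : ℝ) := by positivity
          calc ((N / k : ℕ) : ℝ) * ((N / k : ℕ) : ℝ) ≤ ((N:ℝ)/(k:ℝ)) * ((N:ℝ)/(k:ℝ)) := by
                exact mul_le_mul hdiv hdiv h1 (by positivity)
            _ = (N:ℝ)^2 * (1/(k:ℝ)^2) := by ring
      _ = (N:ℝ)^2 * ∑ k ∈ Finset.Icc 2 N, (1/(k:ℝ)^2) := by rw [Finset.mul_sum]
      _ ≤ (N:ℝ)^2 * (2/3) := by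
          refine mul_le_mul_of_nonneg_left ?_ (by positivity)
          refine le_trans (aux_sum_inv_sq N hN) ?_
          have : (0:ℝ) < 1/((N:ℝ)+1/2) := by positivity
          linarith
      _ = (2/3) * (N:ℝ)^2 := by ring
  have h2 : ((box.filter (fun ab : ℕ × ℕ => Nat.Coprime ab.1 ab.2)).card : ℝ)
      + ((box.filter (fun ab : ℕ × ℕ => ¬ Nat.Coprime ab.1 ab.2)).card : ℝ) = (N:ℝ)^2 := by
    rw [← Nat.cast_add, hsplit, hboxcard]; push_cast; ring
  linarith



lemma height_set_subset (N : ℕ) : {x : ℚ | ratHeight x ≤ N} ⊆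
    (fun ab : ℤ × ℤ => (ab.1 : ℚ) / (ab.2 : ℚ)) ''
      ((Finset.Icc (-(N:ℤ)) (N:ℤ) ×ˢ Finset.Icc (1:ℤ) (N:ℤ) : Finset (ℤ × ℤ)) : Set (ℤ × ℤ)) := by
  intro x hx
  simp only [Set.mem_setOf_eq, ratHeight, max_le_iff] at hx
  refine ⟨(x.num, (x.den : ℤ)), ?_, ?_⟩
  · simp only [Finset.coe_product, Set.mem_prod, Finset.mem_coe, Finset.mem_Icc]
    constructor
    · omega
    · exact ⟨by exact_mod_cast x.pos, by exact_mod_cast hx.2⟩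
  · exact_mod_cast Rat.num_div_den x

lemma height_set_finite (N : ℕ) : {x : ℚ | ratHeight x ≤ N}.Finite :=
  Set.Finite.subset (Set.Finite.image _ (Finset.finite_toSet _)) (height_set_subset N)

lemma height_set_card_le (N : ℕ) : {x : ℚ | ratHeight x ≤ N}.ncard ≤ (2*N+1)*N := by
  refine le_trans (Set.ncard_le_ncard (height_set_subset N)
    (Set.Finite.image _ (Finset.finite_toSet _))) ?_
  refine le_trans (Set.ncard_image_le (Finset.finite_toSet _)) ?_
  rw [Set.ncard_coe_finset, Finset.card_product, Int.card_Icc, Int.card_Icc]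
  have h1 : ((N:ℤ) + 1 - -(N:ℤ)).toNat = 2*N+1 := by omega
  have h2 : ((N:ℤ) + 1 - 1).toNat = N := by omega
  rw [h1, h2]

lemma height_set_card_ge (N : ℕ) (hN : 1 ≤ N) :
    ((N:ℝ)^2)/3 ≤ ({x : ℚ | ratHeight x ≤ N}.ncard : ℝ) := by
  classical
  set C := ((Finset.Ioc 0 N ×ˢ Finset.Ioc 0 N).filter
      (fun ab : ℕ × ℕ => Nat.Coprime ab.1 ab.2)) with hC
  set φ : ℕ × ℕ → ℚ := fun ab => (ab.1 : ℚ) / (ab.2 : ℚ) with hφ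
  have hmem : ∀ ab ∈ C, ∀ (h : True), (φ ab).num = ab.1 ∧ (φ ab).den = ab.2 := by
    intro ab hab _
    simp only [hC, Finset.mem_filter, Finset.mem_product, Finset.mem_Ioc] at hab
    obtain ⟨⟨⟨ha0, _⟩, hb0, _⟩, hcop⟩ := hab
    have hb : (0:ℤ) < (ab.2 : ℤ) := by exact_mod_cast hb0
    have hcop' : Nat.Coprime ((ab.1 : ℤ)).natAbs ((ab.2 : ℤ)).natAbs := by
      simpa using hcop
    constructor
    · have := Rat.num_div_eq_of_coprime hb hcop'
      simpa [hφ] using this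
    · have := Rat.den_div_eq_of_coprime hb hcop'
      have h2 : ((φ ab).den : ℤ) = (ab.2 : ℤ) := by simpa [hφ] using this
      exact_mod_cast h2
  have hinj : Set.InjOn φ C := by
    intro a ha b hb hfab
    have h1 := hmem a ha trivial
    have h2 := hmem b hb trivial
    have hnum : (a.1 : ℤ) = (b.1 : ℤ) := by rw [← h1.1, ← h2.1, hfab]
    have hden : a.2 = b.2 := by rw [← h1.2, ← h2.2, hfab]
    have : a.1 = b.1 := by exact_mod_cast hnum
    exact Prod.ext this hden
  have himg : φ '' (C : Set (ℕ × ℕ)) ⊆ {x : ℚ | ratHeight x ≤ N} := by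
    rintro y ⟨ab, hab, rfl⟩
    rw [Finset.mem_coe] at hab
    have h := hmem ab hab trivial
    simp only [hC, Finset.mem_filter, Finset.mem_product, Finset.mem_Ioc] at hab
    obtain ⟨⟨⟨_, haN⟩, _, hbN⟩, _⟩ := hab
    simp only [Set.mem_setOf_eq, ratHeight, max_le_iff]
    constructor
    · rw [h.1]; simpa using haN
    · rw [h.2]; exact hbN
  calc ((N:ℝ)^2)/3 ≤ (C.card : ℝ) := coprime_pairs_count N hN
    _ = ((φ '' (C : Set (ℕ × ℕ))).ncard : ℝ) := by
        rw [Set.ncard_image_of_injOn hinj, Set.ncard_coe_finset]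
    _ ≤ ({x : ℚ | ratHeight x ≤ N}.ncard : ℝ) := by
        exact_mod_cast Set.ncard_le_ncard himg (height_set_finite N)

lemma gcd_key (A p q G : ℤ) (d : ℕ) (hd : 1 ≤ d) (hA : A ≠ 0) (hq : q ≠ 0)
    (hcop : Nat.Coprime p.natAbs q.natAbs) (hF : A * p^d + q * G ≠ 0) :
    Nat.gcd (A * p^d + q * G).natAbs (q.natAbs ^ d) ∣ A.natAbs ^ d := by
  set F : ℤ := A * p^d + q * G with hFdef
  set n : ℕ := F.natAbs with hn
  set Q : ℕ := q.natAbs with hQ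
  set a : ℕ := A.natAbs with ha
  have hn0 : n ≠ 0 := Int.natAbs_ne_zero.mpr hF
  have hQ0 : Q ≠ 0 := Int.natAbs_ne_zero.mpr hq
  have ha0 : a ≠ 0 := Int.natAbs_ne_zero.mpr hA
  have hgcd0 : Nat.gcd n (Q ^ d) ≠ 0 := Nat.gcd_ne_zero_left hn0
  rw [← Nat.factorization_le_iff_dvd hgcd0 (pow_ne_zero _ ha0)]
  rw [Finsupp.le_def]
  intro ℓ
  by_cases hℓ : ℓ.Prime
  · rw [Nat.factorization_gcd hn0 (pow_ne_zero _ hQ0), Nat.factorization_pow,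
      Nat.factorization_pow]
    simp only [Finsupp.inf_apply, Finsupp.smul_apply, smul_eq_mul]
    set vn := n.factorization ℓ
    set vQ := Q.factorization ℓ
    set va := a.factorization ℓ
    rcases le_or_gt vQ va with h | h
    · exact le_trans (min_le_right _ _) (Nat.mul_le_mul_left d h)
    · have hvn : vn ≤ va := by
        by_contra hcon
        push_neg at hcon
        have h1 : ℓ ^ (va + 1) ∣ n := (Nat.Prime.pow_dvd_iff_le_factorization hℓ hn0).mpr hcon
        have h2 : ℓ ^ (va + 1) ∣ Q := (Nat.Prime.pow_dvd_iff_le_factorization hℓ hQ0).mpr h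
        have h1' : (ℓ:ℤ) ^ (va + 1) ∣ F := by
          have := Int.dvd_natAbs.mp (Int.natCast_dvd_natCast.mpr h1)
          exact_mod_cast this
        have h2' : (ℓ:ℤ) ^ (va + 1) ∣ q := by
          have := Int.dvd_natAbs.mp (Int.natCast_dvd_natCast.mpr h2)
          exact_mod_cast this
        have h3 : (ℓ:ℤ) ^ (va + 1) ∣ A * p ^ d := by
          have heq : F - q * G = A * p ^ d := by rw [hFdef]; ring
          rw [← heq]
          exact dvd_sub h1' (h2'.mul_right G)
        have h4 : ℓ ^ (va + 1) ∣ a * p.natAbs ^ d := by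
          have := Int.natAbs_dvd_natAbs.mpr h3
          simpa [Int.natAbs_mul, Int.natAbs_pow, ha] using this
        have hℓQ : ℓ ∣ Q := dvd_trans (dvd_pow_self ℓ (Nat.succ_ne_zero va)) h2
        have hcp : Nat.Coprime ℓ p.natAbs := Nat.Coprime.coprime_dvd_left hℓQ hcop.symm
        have h5 : ℓ ^ (va + 1) ∣ a :=
          Nat.Coprime.dvd_of_dvd_mul_right (Nat.Coprime.pow (va+1) d hcp) h4
        have := (Nat.Prime.pow_dvd_iff_le_factorization hℓ ha0).mp h5
        omega
      calc min vn (d * vQ) ≤ vn := min_le_left _ _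
        _ ≤ va := hvn
        _ ≤ d * va := Nat.le_mul_of_pos_left va (by omega)
  · rw [Nat.factorization_eq_zero_of_not_prime _ hℓ]
    exact Nat.zero_le _




lemma height_lb (f : ℚ[X]) (hd : 2 ≤ f.natDegree) :
    ∃ κ : ℝ, 0 < κ ∧ ∀ x : ℚ, f.eval x ≠ 0 →
      κ * (ratHeight x : ℝ) ^ f.natDegree ≤ (ratHeight (f.eval x) : ℝ) := by
  classical
  set d := f.natDegree with hddef
  have hf0 : f ≠ 0 := fun h => by simp [h] at hddef; omega
  set c : ℕ := ∏ i ∈ f.support, (f.coeff i).den with hcdef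
  have hc0 : c ≠ 0 := Finset.prod_ne_zero_iff.mpr fun i _ => (f.coeff i).den_nz
  set b : ℕ → ℤ := fun i => ((c:ℚ) * f.coeff i).num with hbdef
  have hb : ∀ i, (b i : ℚ) = (c:ℚ) * f.coeff i := by
    intro i
    by_cases hi : i ∈ f.support
    · obtain ⟨t, ht⟩ := Finset.dvd_prod_of_mem (fun j => (f.coeff j).den) hi
      have key : (c:ℚ) * f.coeff i = ((t * (f.coeff i).num : ℤ) : ℚ) := by
        have hc' : (c:ℚ) = ((f.coeff i).den : ℚ) * (t:ℚ) := by
          rw [hcdef, ht]; push_cast; ring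
        rw [hc']
        push_cast
        rw [mul_comm ((f.coeff i).den : ℚ) (t:ℚ), mul_assoc, mul_comm ((f.coeff i).den : ℚ)]
        rw [Rat.mul_den_eq_num]
      rw [hbdef]
      simp only [key, Rat.num_intCast]
    · have : f.coeff i = 0 := Polynomial.notMem_support_iff.mp hi
      simp [hbdef, this]
  set A : ℤ := b d with hAdef
  have hA0 : A ≠ 0 := by
    intro h
    have h1 : (A : ℚ) = (c:ℚ) * f.coeff d := hb d
    rw [h] at h1
    have : f.coeff d ≠ 0 := by
      rw [hddef]
      exact Polynomial.leadingCoeff_ne_zero.mpr hf0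
    have hc0' : (c:ℚ) ≠ 0 := Nat.cast_ne_zero.mpr hc0
    exact this (by simp at h1; tauto)
  set T : ℝ := 2 * ((∑ i ∈ Finset.range d, |(b i : ℝ)|) + 1) with hTdef
  have hT2 : 2 ≤ T := by
    have : 0 ≤ ∑ i ∈ Finset.range d, |(b i : ℝ)| :=
      Finset.sum_nonneg fun i _ => abs_nonneg _
    rw [hTdef]; nlinarith
  have hT0 : 0 < T := by linarith
  have hTd2 : 2 ≤ T ^ d := by
    calc (2:ℝ) ≤ T := hT2
      _ = T ^ 1 := (pow_one T).symm
      _ ≤ T ^ d := pow_le_pow_right₀ (by linarith) (by omega)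
  have haR : (1:ℝ) ≤ (A.natAbs : ℝ) := by
    have : 1 ≤ A.natAbs := Nat.one_le_iff_ne_zero.mpr (Int.natAbs_ne_zero.mpr hA0)
    exact_mod_cast this
  refine ⟨1 / (T^d * (c:ℝ) * (A.natAbs:ℝ)^d), by positivity, ?_⟩
  intro x hyne
  set p : ℤ := x.num with hpdef
  set Q : ℕ := x.den with hQdef
  set q : ℤ := (Q : ℤ) with hqdef
  have hQ1 : 1 ≤ Q := x.pos
  have hq0 : q ≠ 0 := by rw [hqdef]; exact_mod_cast Nat.one_le_iff_ne_zero.mp hQ1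
  have hqQ : (0:ℚ) < (q:ℚ) := by rw [hqdef]; exact_mod_cast hQ1
  set F : ℤ := ∑ i ∈ Finset.range (d+1), b i * p^i * q^(d-i) with hFdef
  have hx : (x:ℚ) = (p:ℚ) / (q:ℚ) := by
    rw [hpdef, hqdef, hQdef]; exact (Rat.num_div_den x).symm
  have hFQ : (F:ℚ) = (c:ℚ) * (q:ℚ)^d * f.eval x := by
    rw [Polynomial.eval_eq_sum_range, ← hddef, Finset.mul_sum, hFdef]
    push_cast
    refine Finset.sum_congr rfl fun i hi => ?_
    have hid : i ≤ d := by
      have := Finset.mem_range.mp hi; omega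
    have hpow : (q:ℚ)^d = (q:ℚ)^i * (q:ℚ)^(d-i) := by
      rw [← pow_add]; congr 1; omega
    rw [hb i, hx, hpow, div_pow]
    have hqi : ((q:ℚ))^i ≠ 0 := pow_ne_zero _ (ne_of_gt hqQ)
    field_simp
  set G : ℤ := ∑ i ∈ Finset.range d, b i * p^i * q^(d-1-i) with hGdef
  have hsplit : F = A * p^d + q * G := by
    rw [hFdef, Finset.sum_range_succ, hGdef, Finset.mul_sum]
    rw [Nat.sub_self, pow_zero, mul_one, ← hAdef]
    rw [add_comm]
    congr 1
    refine Finset.sum_congr rfl fun i hi => ?_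
    have hid : i < d := Finset.mem_range.mp hi
    have : q * q^(d-1-i) = q^(d-i) := by
      rw [← pow_succ']; congr 1; omega
    rw [← this]; ring
  have hF0 : F ≠ 0 := by
    intro h
    rw [h] at hFQ
    have hcq : (c:ℚ) * (q:ℚ)^d ≠ 0 := by positivity
    exact hyne (by
      rcases mul_eq_zero.mp hFQ.symm with h' | h'
      · exact absurd h' hcq
      · exact h')
  set y : ℚ := f.eval x with hydef
  set n : ℤ := y.num with hndef
  set m : ℕ := y.den with hmdef
  have hm1 : 1 ≤ m := y.pos
  have hcross : F * (m:ℤ) = (c:ℤ) * q^d * n := by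
    have h1 : ((F * (m:ℤ) : ℤ) : ℚ) = (((c:ℤ) * q^d * n : ℤ) : ℚ) := by
      push_cast
      rw [hFQ]
      have h2 : (y:ℚ) * (m:ℚ) = (n:ℚ) := by
        rw [hndef, hmdef]; exact_mod_cast Rat.mul_den_eq_num y
      calc (c:ℚ) * (q:ℚ)^d * f.eval x * (m:ℚ) = (c:ℚ) * (q:ℚ)^d * ((y:ℚ) * (m:ℚ)) := by
            rw [hydef]; ring
        _ = (c:ℚ) * (q:ℚ)^d * (n:ℚ) := by rw [h2]
    exact_mod_cast h1
  have habs : F.natAbs * m = (c * Q^d) * n.natAbs := by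
    have h := congrArg Int.natAbs hcross
    simpa [Int.natAbs_mul, Int.natAbs_pow, hqdef] using h
  have hmdvd : m ∣ c * Q^d := by
    have h1 : m ∣ (c * Q^d) * n.natAbs := ⟨F.natAbs, by rw [← habs]; ring⟩
    exact (Nat.Coprime.dvd_of_dvd_mul_right (Nat.Coprime.symm y.reduced) h1)
  obtain ⟨g, hg⟩ := hmdvd
  have hcQ0 : 0 < c * Q^d := by positivity
  have hg0 : 0 < g := by
    rcases Nat.eq_zero_or_pos g with h | h
    · rw [h, mul_zero] at hg; omega
    · exact h
  have hng : F.natAbs = g * n.natAbs := by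
    have h1 : m * F.natAbs = m * (g * n.natAbs) := by
      rw [mul_comm m (F.natAbs), habs, hg]; ring
    exact Nat.eq_of_mul_eq_mul_left (by omega) h1
  have hcop : Nat.Coprime p.natAbs q.natAbs := by
    have : q.natAbs = Q := Int.natAbs_natCast Q
    rw [this, hpdef, hQdef]
    exact x.reduced
  have hFsp : A * p^d + q * G ≠ 0 := by rw [← hsplit]; exact hF0
  have hgdvd : g ∣ c * A.natAbs ^ d := by
    have h1 : g ∣ Nat.gcd F.natAbs (c * Q^d) :=
      Nat.dvd_gcd ⟨n.natAbs, hng⟩ ⟨m, by rw [hg]; ring⟩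
    have h2 : Nat.gcd F.natAbs (c * Q^d) ∣ c * Nat.gcd F.natAbs (Q^d) := by
      have h3 : Nat.gcd F.natAbs (c * Q^d) ∣ Nat.gcd (c * F.natAbs) (c * Q^d) :=
        Nat.dvd_gcd (dvd_trans (Nat.gcd_dvd_left _ _) (dvd_mul_left _ _))
          (Nat.gcd_dvd_right _ _)
      rwa [Nat.gcd_mul_left] at h3
    have h4 : Nat.gcd F.natAbs (Q^d) ∣ A.natAbs ^ d := by
      have h5 := gcd_key A p q G d (by omega) hA0 hq0 hcop hFsp
      have h6 : q.natAbs = Q := Int.natAbs_natCast Q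
      rwa [← hsplit, h6] at h5
    exact dvd_trans h1 (dvd_trans h2 (mul_dvd_mul_left c h4))
  have hgle : g ≤ c * A.natAbs ^ d := Nat.le_of_dvd (by positivity) hgdvd
  -- ℕ-level bounds
  have keyN1 : F.natAbs ≤ (c * A.natAbs ^ d) * ratHeight y := by
    calc F.natAbs = g * n.natAbs := hng
      _ ≤ (c * A.natAbs ^ d) * ratHeight y := by
          apply Nat.mul_le_mul hgle
          exact le_max_left _ _
  have keyN2 : Q ^ d ≤ (c * A.natAbs ^ d) * ratHeight y := by
    calc Q ^ d ≤ c * Q ^ d := Nat.le_mul_of_pos_left _ (Nat.pos_of_ne_zero hc0)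
      _ = m * g := hg
      _ ≤ ratHeight y * (c * A.natAbs ^ d) := Nat.mul_le_mul (le_max_right _ _) hgle
      _ = (c * A.natAbs ^ d) * ratHeight y := by ring
  -- real versions
  clear_value b A T F G y n m
  set P : ℝ := (p.natAbs : ℝ) with hPdef
  set Qr : ℝ := (Q : ℝ) with hQrdef
  set HX : ℝ := (ratHeight x : ℝ) with hHXdef
  set HY : ℝ := (ratHeight y : ℝ) with hHYdef
  have hHX : HX = max P Qr := by
    rw [hHXdef]
    show ((max x.num.natAbs x.den : ℕ) : ℝ) = _
    rw [Nat.cast_max]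
  have hQr1 : (1:ℝ) ≤ Qr := by rw [hQrdef]; exact_mod_cast hQ1
  have hP0 : (0:ℝ) ≤ P := by positivity
  have hHY0 : (0:ℝ) ≤ HY := by rw [hHYdef]; positivity
  have hcaR : (1:ℝ) ≤ (c:ℝ) * (A.natAbs:ℝ)^d := by
    have h1 : (1:ℝ) ≤ (c:ℝ) := by exact_mod_cast Nat.one_le_iff_ne_zero.mpr hc0
    have h2 : (1:ℝ) ≤ (A.natAbs:ℝ)^d := one_le_pow₀ haR
    nlinarith
  have key1 : (F.natAbs : ℝ) ≤ ((c:ℝ) * (A.natAbs:ℝ)^d) * HY := by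
    rw [hHYdef]
    exact_mod_cast keyN1
  have key2 : Qr ^ d ≤ ((c:ℝ) * (A.natAbs:ℝ)^d) * HY := by
    rw [hHYdef, hQrdef]
    exact_mod_cast keyN2
  -- E1
  have hFabs : (F.natAbs : ℝ) = |((F:ℤ):ℝ)| := by
    rw [Nat.cast_natAbs, Int.cast_abs]
  have hPabs : |((p:ℤ):ℝ)| = P := by rw [hPdef, Nat.cast_natAbs, Int.cast_abs]
  have hQabs : ((q:ℤ):ℝ) = Qr := by rw [hqdef, hQrdef]; push_cast; rfl
  have E1 : HX ^ d ≤ T^d * max (F.natAbs : ℝ) (Qr^d) := by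
    rcases le_or_gt (T * Qr) P with hPT | hPT
    · -- large numerator case
      have hQP : Qr ≤ P := le_trans (le_mul_of_one_le_left (by linarith) (by linarith)) hPT
      have hHXP : HX = P := by rw [hHX, max_eq_left hQP]
      have hP2 : (2:ℝ) ≤ P := le_trans (by nlinarith) hPT
      have hGbound : |((G:ℤ):ℝ)| ≤ (T/2 - 1) * P^(d-1) := by
        have hGcast : ((G:ℤ):ℝ) = ∑ i ∈ Finset.range d, (b i : ℝ) * ((p:ℤ):ℝ)^i * ((q:ℤ):ℝ)^(d-1-i) := by
          rw [hGdef]; push_cast; rfl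
        rw [hGcast]
        refine le_trans (Finset.abs_sum_le_sum_abs _ _) ?_
        have hsum : ∀ i ∈ Finset.range d,
            |(b i : ℝ) * ((p:ℤ):ℝ)^i * ((q:ℤ):ℝ)^(d-1-i)| ≤ |(b i : ℝ)| * P^(d-1) := by
          intro i hi
          have hid : i ≤ d - 1 := by have := Finset.mem_range.mp hi; omega
          rw [abs_mul, abs_mul, abs_pow, abs_pow, hPabs, hQabs, abs_of_nonneg (by linarith : (0:ℝ) ≤ Qr)]
          have h1 : Qr^(d-1-i) ≤ P^(d-1-i) := pow_le_pow_left₀ (by linarith) hQP _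
          have h2 : P^i * Qr^(d-1-i) ≤ P^(d-1) := by
            calc P^i * Qr^(d-1-i) ≤ P^i * P^(d-1-i) :=
                  mul_le_mul_of_nonneg_left h1 (by positivity)
              _ = P^(i + (d-1-i)) := (pow_add P i (d-1-i)).symm
              _ = P^(d-1) := by congr 1; omega
          calc |(b i:ℝ)| * P^i * Qr^(d-1-i) = |(b i:ℝ)| * (P^i * Qr^(d-1-i)) := by ring
            _ ≤ |(b i:ℝ)| * P^(d-1) := mul_le_mul_of_nonneg_left h2 (abs_nonneg _)
        refine le_trans (Finset.sum_le_sum hsum) ?_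
        rw [← Finset.sum_mul]
        have : ∑ i ∈ Finset.range d, |(b i:ℝ)| = T/2 - 1 := by rw [hTdef]; ring
        rw [this]
      have hFlow : P^d / 2 ≤ |((F:ℤ):ℝ)| := by
        have hFcast : ((F:ℤ):ℝ) = ((A:ℤ):ℝ) * ((p:ℤ):ℝ)^d + ((q:ℤ):ℝ) * ((G:ℤ):ℝ) := by
          rw [hsplit]; push_cast; rfl
        have htri : |((A:ℤ):ℝ) * ((p:ℤ):ℝ)^d| - |((q:ℤ):ℝ) * ((G:ℤ):ℝ)| ≤ |((F:ℤ):ℝ)| := by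
          rw [hFcast]
          have h := abs_sub_abs_le_abs_sub (((A:ℤ):ℝ) * ((p:ℤ):ℝ)^d) (-(((q:ℤ):ℝ) * ((G:ℤ):ℝ)))
          rw [abs_neg, sub_neg_eq_add] at h
          exact h
        have hAterm : P^d ≤ |((A:ℤ):ℝ) * ((p:ℤ):ℝ)^d| := by
          rw [abs_mul, abs_pow, hPabs]
          have hAa : |((A:ℤ):ℝ)| = (A.natAbs:ℝ) := by rw [Nat.cast_natAbs, Int.cast_abs]
          rw [hAa]
          nlinarith [pow_nonneg hP0 d]
        have hqG : |((q:ℤ):ℝ) * ((G:ℤ):ℝ)| ≤ Qr * ((T/2 - 1) * P^(d-1)) := by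
          rw [abs_mul, hQabs, abs_of_nonneg (by linarith : (0:ℝ) ≤ Qr)]
          exact mul_le_mul_of_nonneg_left hGbound (by linarith)
        have hPd : P^d = P^(d-1) * P := by
          rw [← pow_succ]; congr 1; omega
        have hlast : Qr * ((T/2 - 1) * P^(d-1)) ≤ P^d / 2 := by
          rw [hPd]
          have hPd1 : (0:ℝ) ≤ P^(d-1) := by positivity
          have h1 : Qr * (T/2 - 1) ≤ Qr * (T/2) := by nlinarith
          have h2 : Qr * (T/2) ≤ P / 2 := by nlinarith
          nlinarith
        linarith
      have hTdPos : (0:ℝ) < T^d := by positivity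
      have s1 : P^d ≤ 2 * |((F:ℤ):ℝ)| := by linarith
      have s2 : 2 * |((F:ℤ):ℝ)| ≤ T^d * |((F:ℤ):ℝ)| :=
        mul_le_mul_of_nonneg_right hTd2 (abs_nonneg _)
      calc HX^d = P^d := by rw [hHXP]
        _ ≤ T^d * |((F:ℤ):ℝ)| := by linarith
        _ = T^d * (F.natAbs:ℝ) := by rw [hFabs]
        _ ≤ T^d * max (F.natAbs : ℝ) (Qr^d) :=
            mul_le_mul_of_nonneg_left (le_max_left _ _) (by positivity)
    · -- small numerator case
      have hHXle : HX ≤ T * Qr := by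
        rw [hHX]
        refine max_le (le_of_lt hPT) ?_
        nlinarith
      have hHX0 : (0:ℝ) ≤ HX := by rw [hHXdef]; positivity
      calc HX^d ≤ (T*Qr)^d := pow_le_pow_left₀ hHX0 hHXle d
        _ = T^d * Qr^d := mul_pow T Qr d
        _ ≤ T^d * max (F.natAbs : ℝ) (Qr^d) :=
            mul_le_mul_of_nonneg_left (le_max_right _ _) (by positivity)
  have hmax : max (F.natAbs : ℝ) (Qr^d) ≤ ((c:ℝ) * (A.natAbs:ℝ)^d) * HY := max_le key1 key2
  rw [one_div, inv_mul_le_iff₀ (by positivity)]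
  calc HX^d ≤ T^d * max (F.natAbs : ℝ) (Qr^d) := E1
    _ ≤ T^d * (((c:ℝ) * (A.natAbs:ℝ)^d) * HY) :=
        mul_le_mul_of_nonneg_left hmax (by positivity)
    _ = T^d * (c:ℝ) * (A.natAbs:ℝ)^d * HY := by ring
lemma height_set_real_eq (r : ℝ) (hr : 0 ≤ r) :
    {x : ℚ | (ratHeight x : ℝ) ≤ r} = {x : ℚ | ratHeight x ≤ ⌊r⌋₊} := by
  ext x
  simp only [Set.mem_setOf_eq]
  exact (Nat.le_floor_iff hr).symm

/-- For a polynomial `f ∈ ℚ[X]` of degree `d ≥ 2`, the density of the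
image of `f` in `ℚ` is zero: the ratio of the number of rationals of height `≤ B` in
the image of `f` to the number of rationals of height `≤ B` tends to `0` as `B → ∞`;
moreover for suitable constants `B₀, E₀ > 0` the ratio is at most `E₀·B^{2/d - 2}`
for all `B ≥ B₀`. -/
theorem density_of_polynomial_image_zero (f : ℚ[X]) (hd : 2 ≤ f.natDegree) :
    Filter.Tendsto
      (fun B : ℝ =>
        ({y : ℚ | (∃ x : ℚ, f.eval x = y) ∧ (ratHeight y : ℝ) ≤ B}.ncard : ℝ) /
        ({x : ℚ | (ratHeight x : ℝ) ≤ B}.ncard : ℝ))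
      Filter.atTop (nhds 0) ∧
    ∃ B₀ E₀ : ℝ, 0 < B₀ ∧ 0 < E₀ ∧ ∀ B : ℝ, B₀ ≤ B →
      ({y : ℚ | (∃ x : ℚ, f.eval x = y) ∧ (ratHeight y : ℝ) ≤ B}.ncard : ℝ) /
        ({x : ℚ | (ratHeight x : ℝ) ≤ B}.ncard : ℝ) ≤
      E₀ * B ^ (2 / (f.natDegree : ℝ) - 2) := by
  obtain ⟨κ, hκ0, hκ⟩ := height_lb f hd
  set d : ℕ := f.natDegree with hddef
  have hd2R : (2:ℝ) ≤ (d:ℝ) := by exact_mod_cast hd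
  have hd0R : (0:ℝ) < (d:ℝ) := by linarith
  set E₀ : ℝ := 48 / κ ^ ((2:ℝ)/(d:ℝ)) with hE₀def
  have hE₀pos : 0 < E₀ := by
    have := Real.rpow_pos_of_pos hκ0 ((2:ℝ)/(d:ℝ))
    positivity
  set B₀ : ℝ := κ + 2 with hB₀def
  have hB₀pos : 0 < B₀ := by positivity
  -- the main quantitative bound
  have main : ∀ B : ℝ, B₀ ≤ B →
      ({y : ℚ | (∃ x : ℚ, f.eval x = y) ∧ (ratHeight y : ℝ) ≤ B}.ncard : ℝ) /
        ({x : ℚ | (ratHeight x : ℝ) ≤ B}.ncard : ℝ) ≤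
      E₀ * B ^ (2 / (d : ℝ) - 2) := by
    intro B hB
    have hB2 : (2:ℝ) ≤ B := by rw [hB₀def] at hB; linarith
    have hBpos : (0:ℝ) < B := by linarith
    have hBκ : 1 ≤ B / κ := by
      rw [le_div_iff₀ hκ0]
      rw [hB₀def] at hB; linarith
    set M : ℝ := (B/κ) ^ ((d:ℝ)⁻¹) with hMdef
    have hM1 : (1:ℝ) ≤ M := by
      rw [hMdef]
      calc (1:ℝ) = (1:ℝ) ^ ((d:ℝ)⁻¹) := (Real.one_rpow _).symm
        _ ≤ (B/κ) ^ ((d:ℝ)⁻¹) := Real.rpow_le_rpow (by norm_num) hBκ (by positivity)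
    have hM0 : (0:ℝ) ≤ M := by linarith
    -- numerator bound
    set N : ℕ := ⌊M⌋₊ with hNdef
    have hNM : (N:ℝ) ≤ M := Nat.floor_le hM0
    have hsub : {y : ℚ | (∃ x : ℚ, f.eval x = y) ∧ (ratHeight y : ℝ) ≤ B} ⊆
        insert 0 (f.eval ''  {x : ℚ | ratHeight x ≤ N}) := by
      rintro y ⟨⟨x, rfl⟩, hyB⟩
      by_cases h0 : f.eval x = 0
      · rw [h0]; exact Set.mem_insert _ _
      · right
        refine ⟨x, ?_, rfl⟩
        have h1 := hκ x h0
        have h2 : (ratHeight x : ℝ) ^ (d:ℕ) ≤ B / κ := by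
          rw [le_div_iff₀ hκ0]
          calc (ratHeight x : ℝ)^(d:ℕ) * κ = κ * (ratHeight x : ℝ)^(d:ℕ) := by ring
            _ ≤ (ratHeight (f.eval x) : ℝ) := h1
            _ ≤ B := hyB
        have h3 : (ratHeight x : ℝ) ≤ M := by
          have h4 := Real.rpow_le_rpow (by positivity) h2 (by positivity : (0:ℝ) ≤ (d:ℝ)⁻¹)
          rwa [Real.pow_rpow_inv_natCast (by positivity) (by omega : d ≠ 0)] at h4
        simp only [Set.mem_setOf_eq]
        rw [← Nat.le_floor_iff hM0] at h3
        exact h3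
    have hfin : (insert (0:ℚ) (f.eval '' {x : ℚ | ratHeight x ≤ N})).Finite :=
      Set.Finite.insert _ (Set.Finite.image _ (height_set_finite N))
    have hnum : ({y : ℚ | (∃ x : ℚ, f.eval x = y) ∧ (ratHeight y : ℝ) ≤ B}.ncard : ℝ) ≤
        4 * M^2 := by
      have c1 : {y : ℚ | (∃ x : ℚ, f.eval x = y) ∧ (ratHeight y : ℝ) ≤ B}.ncard ≤
          (insert (0:ℚ) (f.eval '' {x : ℚ | ratHeight x ≤ N})).ncard :=
        Set.ncard_le_ncard hsub hfin
      have c2 : (insert (0:ℚ) (f.eval '' {x : ℚ | ratHeight x ≤ N})).ncard ≤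
          (f.eval '' {x : ℚ | ratHeight x ≤ N}).ncard + 1 := Set.ncard_insert_le _ _
      have c3 : (f.eval '' {x : ℚ | ratHeight x ≤ N}).ncard ≤
          {x : ℚ | ratHeight x ≤ N}.ncard := Set.ncard_image_le (height_set_finite N)
      have c4 := height_set_card_le N
      have call : {y : ℚ | (∃ x : ℚ, f.eval x = y) ∧ (ratHeight y : ℝ) ≤ B}.ncard ≤
          (2*N+1)*N + 1 := by omega
      have cR : (((2*N+1)*N + 1 : ℕ) : ℝ) ≤ 4 * M^2 := by
        push_cast
        nlinarith [hNM, hM1]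
      calc ({y : ℚ | (∃ x : ℚ, f.eval x = y) ∧ (ratHeight y : ℝ) ≤ B}.ncard : ℝ)
          ≤ (((2*N+1)*N + 1 : ℕ) : ℝ) := by exact_mod_cast call
        _ ≤ 4 * M^2 := cR
    -- denominator bound
    have hden : B^2 / 12 ≤ ({x : ℚ | (ratHeight x : ℝ) ≤ B}.ncard : ℝ) := by
      rw [height_set_real_eq B (by linarith)]
      set N' : ℕ := ⌊B⌋₊ with hN'def
      have hN'1 : 1 ≤ N' := by
        rw [hN'def]
        exact Nat.one_le_iff_ne_zero.mpr (by
          intro h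
          have := Nat.floor_eq_zero.mp h
          linarith)
      have h1 := height_set_card_ge N' hN'1
      have h2 : B / 2 ≤ (N' : ℝ) := by
        have h3 : B < (N' : ℝ) + 1 := Nat.lt_floor_add_one B
        linarith
      have h4 : B^2/12 ≤ ((N':ℝ))^2/3 := by nlinarith
      linarith
    have hdenpos : (0:ℝ) < ({x : ℚ | (ratHeight x : ℝ) ≤ B}.ncard : ℝ) := by
      have : (0:ℝ) < B^2/12 := by positivity
      linarith
    -- combine
    have hM2 : M^2 = (B/κ) ^ ((2:ℝ)/(d:ℝ)) := by
      rw [hMdef, ← Real.rpow_natCast ((B/κ) ^ ((d:ℝ)⁻¹)) 2, ← Real.rpow_mul (by positivity)]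
      norm_num
      rw [inv_mul_eq_div]
    have hMB : M^2 = B ^ ((2:ℝ)/(d:ℝ)) / κ ^ ((2:ℝ)/(d:ℝ)) := by
      rw [hM2, Real.div_rpow (le_of_lt hBpos) (le_of_lt hκ0)]
    have hratio : ({y : ℚ | (∃ x : ℚ, f.eval x = y) ∧ (ratHeight y : ℝ) ≤ B}.ncard : ℝ) /
        ({x : ℚ | (ratHeight x : ℝ) ≤ B}.ncard : ℝ) ≤ (4 * M^2) / (B^2/12) := by
      apply div_le_div₀ (by positivity) hnum (by positivity) hden
    refine le_trans hratio ?_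
    rw [hMB]
    have hrw : B ^ ((2:ℝ)/(d:ℝ) - 2) = B ^ ((2:ℝ)/(d:ℝ)) / B^2 := by
      rw [Real.rpow_sub hBpos]
      congr 1
      rw [← Real.rpow_natCast B 2]
      norm_num
    rw [hE₀def, hrw]
    have hκpow : (0:ℝ) < κ ^ ((2:ℝ)/(d:ℝ)) := Real.rpow_pos_of_pos hκ0 _
    have hBpow : (0:ℝ) < B ^ ((2:ℝ)/(d:ℝ)) := Real.rpow_pos_of_pos hBpos _
    rw [div_le_iff₀ (by positivity : (0:ℝ) < B^2/12)] at *
    field_simp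
    norm_num
  refine ⟨?_, B₀, E₀, hB₀pos, hE₀pos, main⟩
  -- tendsto part
  have hexp : (0:ℝ) < 2 - 2/(d:ℝ) := by
    have : 2/(d:ℝ) ≤ 1 := by
      rw [div_le_one hd0R]; linarith
    linarith
  have htend : Filter.Tendsto (fun B : ℝ => E₀ * B ^ (2/(d:ℝ) - 2)) Filter.atTop (nhds 0) := by
    have h1 : Filter.Tendsto (fun B : ℝ => B ^ (-(2 - 2/(d:ℝ)))) Filter.atTop (nhds 0) :=
      tendsto_rpow_neg_atTop hexp
    have h2 : (fun B : ℝ => E₀ * B ^ (2/(d:ℝ) - 2)) =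
        (fun B : ℝ => E₀ * B ^ (-(2 - 2/(d:ℝ)))) := by
      funext B; congr 1; ring_nf
    rw [h2]
    have := h1.const_mul E₀
    simpa using this
  refine tendsto_of_tendsto_of_tendsto_of_le_of_le' tendsto_const_nhds htend ?_ ?_
  · exact Filter.Eventually.of_forall fun B => div_nonneg (Nat.cast_nonneg _) (Nat.cast_nonneg _)
  · exact Filter.eventually_atTop.mpr ⟨B₀, main⟩
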